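/- There exist real constants c > 0 and ε > 0 such that for every n₀ there exist an integer n ≥ n₀, a finite set 𝒜 ⊂ ℝ with |𝒜| = n, and a simple graph G on vertex set 𝒜 with at least n^{1+c} edges, for which |𝒜 +_G 𝒜| + |𝒜 ·_G 𝒜| < n^{1+c−ε}. In other words, the Strong Erdős–Szemerédi Conjecture is false. -/

import Mathlib

/-- The set of sums along the edges of a graph `G` on real numbers. -/
def sumsAlong (G : SimpleGraph ℝ) : Set ℝ := {x | ∃ a b : ℝ, G.Adj a b ∧ x = a + b}

/-- The set of products along the edges of a graph `G` on real numbers. -/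
def prodsAlong (G : SimpleGraph ℝ) : Set ℝ := {x | ∃ a b : ℝ, G.Adj a b ∧ x = a * b}

namespace ARSCounter

/-- The big modulus `N = (K+1)!`. -/
def NN (K : ℕ) : ℕ := Nat.factorial (K + 1)

/-- `Ni K i = N / (i+2)`. -/
def Ni (K i : ℕ) : ℕ := NN K / (i + 2)

/-- First class of vertices: `N * (i+2) * (1 + (t+1) N)`. -/
def va (K i t : ℕ) : ℕ := NN K * ((i + 2) + (i + 2) * (t + 1) * NN K)

/-- Second class of vertices: `(N/(i+2)) * (1 + (s+1) N)`. -/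
def vb (K i s : ℕ) : ℕ := Ni K i * (1 + (s + 1) * NN K)

lemma NN_pos (K : ℕ) : 0 < NN K := Nat.factorial_pos _

lemma q_dvd {K i : ℕ} (hi : i < K) : (i + 2) ∣ NN K :=
  Nat.dvd_factorial (by omega) (by omega)

lemma Ni_mul {K i : ℕ} (hi : i < K) : Ni K i * (i + 2) = NN K :=
  Nat.div_mul_cancel (q_dvd hi)

lemma Ni_pos {K i : ℕ} (hi : i < K) : 0 < Ni K i := by
  rcases Nat.eq_zero_or_pos (Ni K i) with h | h
  · exfalso
    have h2 := Ni_mul hi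
    rw [h, zero_mul] at h2
    exact (NN_pos K).ne' h2.symm
  · exact h

lemma Ni_lt {K i : ℕ} (hi : i < K) : Ni K i < NN K := by
  have h := Ni_mul hi
  have hp := Ni_pos hi
  calc Ni K i < Ni K i * 2 := by omega
  _ ≤ Ni K i * (i + 2) := Nat.mul_le_mul le_rfl (by omega)
  _ = NN K := h

lemma q_lt {K i : ℕ} (hK2 : 2 ≤ K) (hi : i < K) : i + 2 < NN K := by
  have h1 : i + 2 ≤ K + 1 := by omega
  have h2 : K + 1 < Nat.factorial (K + 1) := Nat.lt_factorial_self (by omega)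
  have h3 : NN K = Nat.factorial (K + 1) := rfl
  omega

lemma va_mod (K i t : ℕ) : va K i t % NN K = 0 := Nat.mul_mod_right _ _

lemma vb_mod {K i : ℕ} (hi : i < K) (s : ℕ) : vb K i s % NN K = Ni K i := by
  have h : vb K i s = Ni K i + Ni K i * (s + 1) * NN K := by unfold vb; ring
  rw [h, Nat.add_mul_mod_self_right, Nat.mod_eq_of_lt (Ni_lt hi)]

lemma va_inj {K i i' t t' : ℕ} (hK2 : 2 ≤ K) (hi : i < K) (hi' : i' < K)
    (h : va K i t = va K i' t') : i = i' ∧ t = t' := by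
  unfold va at h
  have h1 : (i + 2) + (i + 2) * (t + 1) * NN K = (i' + 2) + (i' + 2) * (t' + 1) * NN K :=
    Nat.eq_of_mul_eq_mul_left (NN_pos K) h
  have h2 : ((i + 2) + (i + 2) * (t + 1) * NN K) % NN K
      = ((i' + 2) + (i' + 2) * (t' + 1) * NN K) % NN K := by rw [h1]
  rw [Nat.add_mul_mod_self_right, Nat.add_mul_mod_self_right,
    Nat.mod_eq_of_lt (q_lt hK2 hi), Nat.mod_eq_of_lt (q_lt hK2 hi')] at h2
  have hii : i = i' := by omega
  subst hii
  have h3 : (i + 2) * (t + 1) * NN K = (i + 2) * (t' + 1) * NN K := by omega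
  have h4 : (i + 2) * (t + 1) = (i + 2) * (t' + 1) :=
    Nat.eq_of_mul_eq_mul_right (NN_pos K) h3
  have h5 : t + 1 = t' + 1 := Nat.eq_of_mul_eq_mul_left (by omega) h4
  exact ⟨rfl, by omega⟩

lemma vb_inj {K i i' s s' : ℕ} (hi : i < K) (hi' : i' < K)
    (h : vb K i s = vb K i' s') : i = i' ∧ s = s' := by
  have h1 : vb K i s % NN K = vb K i' s' % NN K := by rw [h]
  rw [vb_mod hi, vb_mod hi'] at h1
  have h2 : Ni K i * (i + 2) = Ni K i * (i' + 2) := by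
    calc Ni K i * (i + 2) = NN K := Ni_mul hi
    _ = Ni K i' * (i' + 2) := (Ni_mul hi').symm
    _ = Ni K i * (i' + 2) := by rw [← h1]
  have h3 : i + 2 = i' + 2 := Nat.eq_of_mul_eq_mul_left (Ni_pos hi) h2
  have hii : i = i' := by omega
  subst hii
  unfold vb at h
  have h4 : 1 + (s + 1) * NN K = 1 + (s' + 1) * NN K :=
    Nat.eq_of_mul_eq_mul_left (Ni_pos hi) h
  have h5 : (s + 1) * NN K = (s' + 1) * NN K := by omega
  have h6 : s + 1 = s' + 1 := Nat.eq_of_mul_eq_mul_right (NN_pos K) h5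
  exact ⟨rfl, by omega⟩

lemma va_ne_vb {K i i' t s : ℕ} (hi' : i' < K) : va K i t ≠ vb K i' s := by
  intro h
  have h1 : va K i t % NN K = vb K i' s % NN K := by rw [h]
  rw [va_mod, vb_mod hi'] at h1
  exact (Ni_pos hi').ne' h1.symm

/-- The key sum identity. -/
lemma sum_formula {K i : ℕ} (hi : i < K) (t s : ℕ) :
    va K i t + vb K i s
      = Ni K i * ((i + 2) ^ 2 + 1) + Ni K i * NN K * ((i + 2) ^ 2 * (t + 1) + (s + 1)) := by
  have h : NN K = Ni K i * (i + 2) := (Ni_mul hi).symm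
  unfold va vb
  rw [h]; ring

/-- The key product identity: the `(i+2)` cancels. -/
lemma prod_formula {K i : ℕ} (hi : i < K) (t s : ℕ) :
    va K i t * vb K i s
      = NN K * NN K * ((1 + (t + 1) * NN K) * (1 + (s + 1) * NN K)) := by
  have h : NN K = Ni K i * (i + 2) := (Ni_mul hi).symm
  unfold va vb
  rw [h]; ring

/-- Half of the adjacency relation. -/
def Pd (K : ℕ) (x y : ℝ) : Prop :=
  ∃ i t s : ℕ, i < K ∧ t < K ^ 4 ∧ s < K ^ 4 ∧
    x = ((va K i t : ℕ) : ℝ) ∧ y = ((vb K i s : ℕ) : ℝ)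

/-- The graph. -/
def GG (K : ℕ) : SimpleGraph ℝ where
  Adj x y := Pd K x y ∨ Pd K y x
  symm := by constructor; intro x y h; exact h.symm
  loopless := by
    constructor
    intro x h
    rcases h with h | h <;>
    · obtain ⟨i, t, s, hi, ht, hs, hx1, hx2⟩ := h
      rw [hx1] at hx2
      exact va_ne_vb hi (Nat.cast_injective hx2)

lemma GG_adj {K : ℕ} {x y : ℝ} : (GG K).Adj x y ↔ (Pd K x y ∨ Pd K y x) := Iff.rfl

/-- The vertex set. -/
noncomputable def AF (K : ℕ) : Finset ℝ :=
  ((Finset.range K ×ˢ Finset.range (K ^ 4)).image fun p => ((va K p.1 p.2 : ℕ) : ℝ)) ∪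
  ((Finset.range K ×ˢ Finset.range (K ^ 4)).image fun p => ((vb K p.1 p.2 : ℕ) : ℝ))

lemma va_mem {K i t : ℕ} (hi : i < K) (ht : t < K ^ 4) : ((va K i t : ℕ) : ℝ) ∈ AF K :=
  Finset.mem_union_left _ (Finset.mem_image.mpr
    ⟨(i, t), Finset.mem_product.mpr ⟨Finset.mem_range.mpr hi, Finset.mem_range.mpr ht⟩, rfl⟩)

lemma vb_mem {K i s : ℕ} (hi : i < K) (hs : s < K ^ 4) : ((vb K i s : ℕ) : ℝ) ∈ AF K :=
  Finset.mem_union_right _ (Finset.mem_image.mpr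
    ⟨(i, s), Finset.mem_product.mpr ⟨Finset.mem_range.mpr hi, Finset.mem_range.mpr hs⟩, rfl⟩)

lemma adj_mem {K : ℕ} {a b : ℝ} (h : (GG K).Adj a b) : a ∈ AF K ∧ b ∈ AF K := by
  rcases h with ⟨i, t, s, hi, ht, hs, ha, hb⟩ | ⟨i, t, s, hi, ht, hs, hb, ha⟩
  · exact ⟨ha ▸ va_mem hi ht, hb ▸ vb_mem hi hs⟩
  · exact ⟨ha ▸ vb_mem hi hs, hb ▸ va_mem hi ht⟩

lemma AF_card {K : ℕ} (hK2 : 2 ≤ K) : (AF K).card = 2 * K ^ 5 := by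
  have hinj1 : Set.InjOn (fun p : ℕ × ℕ => ((va K p.1 p.2 : ℕ) : ℝ))
      ↑(Finset.range K ×ˢ Finset.range (K ^ 4)) := by
    intro p hp q hq h
    simp only [Finset.coe_product, Set.mem_prod, Finset.mem_coe, Finset.mem_range] at hp hq
    have := va_inj hK2 hp.1 hq.1 (Nat.cast_injective h)
    exact Prod.ext this.1 this.2
  have hinj2 : Set.InjOn (fun p : ℕ × ℕ => ((vb K p.1 p.2 : ℕ) : ℝ))
      ↑(Finset.range K ×ˢ Finset.range (K ^ 4)) := by
    intro p hp q hq h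
    simp only [Finset.coe_product, Set.mem_prod, Finset.mem_coe, Finset.mem_range] at hp hq
    have := vb_inj hp.1 hq.1 (Nat.cast_injective h)
    exact Prod.ext this.1 this.2
  have hdisj : Disjoint
      ((Finset.range K ×ˢ Finset.range (K ^ 4)).image fun p => ((va K p.1 p.2 : ℕ) : ℝ))
      ((Finset.range K ×ˢ Finset.range (K ^ 4)).image fun p => ((vb K p.1 p.2 : ℕ) : ℝ)) := by
    rw [Finset.disjoint_left]
    intro x hx1 hx2
    obtain ⟨p, hp, hp2⟩ := Finset.mem_image.mp hx1
    obtain ⟨q, hq, hq2⟩ := Finset.mem_image.mp hx2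
    simp only [Finset.mem_product, Finset.mem_range] at hp hq
    rw [← hp2] at hq2
    exact va_ne_vb hq.1 (Nat.cast_injective hq2.symm)
  unfold AF
  rw [Finset.card_union_of_disjoint hdisj, Finset.card_image_of_injOn hinj1,
    Finset.card_image_of_injOn hinj2, Finset.card_product, Finset.card_range,
    Finset.card_range]
  ring

/-- Lower bound on the number of edges. -/
lemma edges_le {K : ℕ} (hK2 : 2 ≤ K) : K ^ 9 ≤ (GG K).edgeSet.ncard := by
  classical
  set E₀ := (Finset.range K ×ˢ Finset.range (K ^ 4) ×ˢ Finset.range (K ^ 4)).image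
    (fun p : ℕ × ℕ × ℕ => s(((va K p.1 p.2.1 : ℕ) : ℝ), ((vb K p.1 p.2.2 : ℕ) : ℝ))) with hE
  have hcard : E₀.card = K ^ 9 := by
    rw [hE, Finset.card_image_of_injOn, Finset.card_product, Finset.card_product,
      Finset.card_range, Finset.card_range]
    · ring
    · intro p hp q hq h
      simp only [Finset.coe_product, Set.mem_prod, Finset.mem_coe, Finset.mem_range] at hp hq
      rcases Sym2.eq_iff.mp h with ⟨h1, h2⟩ | ⟨h1, h2⟩
      · have e1 := va_inj hK2 hp.1 hq.1 (Nat.cast_injective h1)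
        have e2 := vb_inj hp.1 hq.1 (Nat.cast_injective h2)
        exact Prod.ext e1.1 (Prod.ext e1.2 e2.2)
      · exact absurd (Nat.cast_injective h1) (va_ne_vb hq.1)
  have hsubE : (↑E₀ : Set (Sym2 ℝ)) ⊆ (GG K).edgeSet := by
    intro e he
    rw [Finset.mem_coe, hE, Finset.mem_image] at he
    obtain ⟨p, hp, rfl⟩ := he
    simp only [Finset.mem_product, Finset.mem_range] at hp
    rw [SimpleGraph.mem_edgeSet]
    exact Or.inl ⟨p.1, p.2.1, p.2.2, hp.1, hp.2.1, hp.2.2, rfl, rfl⟩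
  have hfinE : (GG K).edgeSet.Finite := by
    apply Set.Finite.subset
      (Finset.finite_toSet ((AF K ×ˢ AF K).image fun p : ℝ × ℝ => s(p.1, p.2)))
    intro e
    refine Sym2.ind (fun x y hxy => ?_) e
    rw [SimpleGraph.mem_edgeSet] at hxy
    have hmem := adj_mem hxy
    exact Finset.mem_coe.mpr (Finset.mem_image.mpr
      ⟨(x, y), Finset.mem_product.mpr ⟨hmem.1, hmem.2⟩, rfl⟩)
  calc K ^ 9 = E₀.card := hcard.symm
  _ = (↑E₀ : Set (Sym2 ℝ)).ncard := (Set.ncard_coe_finset _).symm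
  _ ≤ (GG K).edgeSet.ncard := Set.ncard_le_ncard hsubE hfinE

/-- Upper bound on the number of sums along edges. -/
lemma sums_le {K : ℕ} (hK3 : 3 ≤ K) : (sumsAlong (GG K)).ncard ≤ 2 * K ^ 7 := by
  classical
  set F := (Finset.range K ×ˢ Finset.range (2 * K ^ 6)).image
      (fun p : ℕ × ℕ =>
        ((Ni K p.1 * ((p.1 + 2) ^ 2 + 1) + Ni K p.1 * NN K * (p.2 + 1) : ℕ) : ℝ)) with hF
  have hsub : sumsAlong (GG K) ⊆ ↑F := by
    rintro x ⟨a, b, hadj, rfl⟩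
    have key : ∃ i t s : ℕ, i < K ∧ t < K ^ 4 ∧ s < K ^ 4 ∧
        a + b = ((va K i t + vb K i s : ℕ) : ℝ) := by
      rcases hadj with ⟨i, t, s, hi, ht, hs, ha, hb⟩ | ⟨i, t, s, hi, ht, hs, hb, ha⟩
      · exact ⟨i, t, s, hi, ht, hs, by rw [ha, hb]; push_cast; ring⟩
      · exact ⟨i, t, s, hi, ht, hs, by rw [ha, hb]; push_cast; ring⟩
    obtain ⟨i, t, s, hi, ht, hs, hab⟩ := key
    rw [hab, sum_formula hi t s]
    apply Finset.mem_coe.mpr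
    rw [hF]
    apply Finset.mem_image.mpr
    refine ⟨(i, (i + 2) ^ 2 * (t + 1) + s), ?_, ?_⟩
    · have hb1 : i + 2 ≤ K + 1 := by omega
      have hb2 : (i + 2) ^ 2 ≤ (K + 1) ^ 2 := Nat.pow_le_pow_left hb1 2
      have hb3 : (i + 2) ^ 2 * (t + 1) ≤ (K + 1) ^ 2 * K ^ 4 :=
        Nat.mul_le_mul hb2 (by omega)
      have h9 : 3 * K ≤ K * K := Nat.mul_le_mul hK3 le_rfl
      have h10 : (K + 1) ^ 2 + 1 = K * K + 2 * K + 2 := by ring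
      have h11 : (K + 1) ^ 2 + 1 ≤ 2 * (K * K) := by omega
      have hb4 : ((K + 1) ^ 2 + 1) * K ^ 4 ≤ 2 * K ^ 6 := by
        calc ((K + 1) ^ 2 + 1) * K ^ 4 ≤ (2 * (K * K)) * K ^ 4 :=
              Nat.mul_le_mul h11 le_rfl
        _ = 2 * K ^ 6 := by ring
      have hb5 : (i + 2) ^ 2 * (t + 1) + s + 1 ≤ 2 * K ^ 6 := by
        have : (K + 1) ^ 2 * K ^ 4 + K ^ 4 = ((K + 1) ^ 2 + 1) * K ^ 4 := by ring
        omega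
      simp only [Finset.mem_product, Finset.mem_range]
      exact ⟨hi, by omega⟩
    · push_cast
      ring
  calc (sumsAlong (GG K)).ncard ≤ (↑F : Set ℝ).ncard :=
        Set.ncard_le_ncard hsub (Finset.finite_toSet F)
  _ = F.card := Set.ncard_coe_finset F
  _ ≤ (Finset.range K ×ˢ Finset.range (2 * K ^ 6)).card := Finset.card_image_le
  _ = K * (2 * K ^ 6) := by
        rw [Finset.card_product, Finset.card_range, Finset.card_range]
  _ = 2 * K ^ 7 := by ring

/-- Upper bound on the number of products along edges. -/
lemma prods_le (K : ℕ) : (prodsAlong (GG K)).ncard ≤ K ^ 8 := by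
  classical
  set F := (Finset.range (K ^ 4) ×ˢ Finset.range (K ^ 4)).image
      (fun p : ℕ × ℕ =>
        ((NN K * NN K * ((1 + (p.1 + 1) * NN K) * (1 + (p.2 + 1) * NN K)) : ℕ) : ℝ)) with hF
  have hsub : prodsAlong (GG K) ⊆ ↑F := by
    rintro x ⟨a, b, hadj, rfl⟩
    have key : ∃ i t s : ℕ, i < K ∧ t < K ^ 4 ∧ s < K ^ 4 ∧
        a * b = ((va K i t * vb K i s : ℕ) : ℝ) := by
      rcases hadj with ⟨i, t, s, hi, ht, hs, ha, hb⟩ | ⟨i, t, s, hi, ht, hs, hb, ha⟩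
      · exact ⟨i, t, s, hi, ht, hs, by rw [ha, hb]; push_cast; ring⟩
      · exact ⟨i, t, s, hi, ht, hs, by rw [ha, hb]; push_cast; ring⟩
    obtain ⟨i, t, s, hi, ht, hs, hab⟩ := key
    rw [hab, prod_formula hi t s]
    apply Finset.mem_coe.mpr
    rw [hF]
    apply Finset.mem_image.mpr
    refine ⟨(t, s), ?_, rfl⟩
    simp only [Finset.mem_product, Finset.mem_range]
    exact ⟨ht, hs⟩
  calc (prodsAlong (GG K)).ncard ≤ (↑F : Set ℝ).ncard :=
        Set.ncard_le_ncard hsub (Finset.finite_toSet F)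
  _ = F.card := Set.ncard_coe_finset F
  _ ≤ (Finset.range (K ^ 4) ×ˢ Finset.range (K ^ 4)).card := Finset.card_image_le
  _ = K ^ 4 * K ^ 4 := by
        rw [Finset.card_product, Finset.card_range]
  _ = K ^ 8 := by ring

/-- rpow comparison from natural power comparison, `≤` version. -/
lemma rpow_aux_le {a b : ℝ} (ha : 0 ≤ a) (hb : 0 ≤ b) {p q : ℕ} (hq : 0 < q)
    (h : a ^ p ≤ b ^ q) : a ^ ((p : ℝ) / (q : ℝ)) ≤ b := by
  have hq' : ((q : ℝ)) ≠ 0 := by positivity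
  have h1 : a ^ ((p : ℝ) / (q : ℝ)) = (a ^ p) ^ ((1 : ℝ) / q) := by
    rw [← Real.rpow_natCast a p, ← Real.rpow_mul ha, mul_one_div]
  have h2 : b = (b ^ q) ^ ((1 : ℝ) / q) := by
    rw [← Real.rpow_natCast b q, ← Real.rpow_mul hb, mul_one_div, div_self hq',
      Real.rpow_one]
  rw [h1, h2]
  exact Real.rpow_le_rpow (pow_nonneg ha p) h (by positivity)

/-- rpow comparison from natural power comparison, `<` version. -/
lemma rpow_aux_lt {a b : ℝ} (ha : 0 ≤ a) (hb : 0 ≤ b) {p q : ℕ} (hq : 0 < q)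
    (h : a ^ q < b ^ p) : a < b ^ ((p : ℝ) / (q : ℝ)) := by
  have hq' : ((q : ℝ)) ≠ 0 := by positivity
  have h1 : a = (a ^ q) ^ ((1 : ℝ) / q) := by
    rw [← Real.rpow_natCast a q, ← Real.rpow_mul ha, mul_one_div, div_self hq',
      Real.rpow_one]
  have h2 : (b ^ p) ^ ((1 : ℝ) / q) = b ^ ((p : ℝ) / (q : ℝ)) := by
    rw [← Real.rpow_natCast b p, ← Real.rpow_mul hb, mul_one_div]
  rw [h1, ← h2]
  exact Real.rpow_lt_rpow (pow_nonneg ha q) h (by positivity)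

end ARSCounter

open ARSCounter in
/-- The Strong Erdős–Szemerédi Conjecture is false: there are `c, ε > 0` such that
for arbitrarily large `n` one can find an `n`-element set `𝒜 ⊂ ℝ` and a graph `G`
on `𝒜` with at least `n^{1+c}` edges for which
`|𝒜 +_G 𝒜| + |𝒜 ·_G 𝒜| < n^{1+c-ε}`. -/
theorem strong_erdos_szemeredi_false :
    ∃ c ε : ℝ, 0 < c ∧ 0 < ε ∧ ∀ n₀ : ℕ, ∃ n : ℕ, n₀ ≤ n ∧
      ∃ (𝒜 : Finset ℝ) (G : SimpleGraph ℝ),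
        𝒜.card = n ∧
        (∀ a b : ℝ, G.Adj a b → a ∈ 𝒜 ∧ b ∈ 𝒜) ∧
        (n : ℝ) ^ (1 + c) ≤ (G.edgeSet.ncard : ℝ) ∧
        ((sumsAlong G).ncard + (prodsAlong G).ncard : ℝ) < (n : ℝ) ^ (1 + c - ε) := by
  refine ⟨3/4, 1/10, by norm_num, by norm_num, ?_⟩
  intro n₀
  set K : ℕ := max 128 n₀ with hKdef
  have hK : 128 ≤ K := le_max_left _ _
  have hK2 : 2 ≤ K := by omega
  have hK3 : 3 ≤ K := by omega
  refine ⟨2 * K ^ 5, ?_, AF K, GG K, AF_card hK2, fun a b h => adj_mem h, ?_, ?_⟩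
  · -- n₀ ≤ n
    have h1 : n₀ ≤ K := le_max_right _ _
    have h2 : K ≤ K ^ 5 := Nat.le_self_pow (by norm_num) K
    omega
  · -- edge count
    have hE : K ^ 9 ≤ (GG K).edgeSet.ncard := edges_le hK2
    have hnat : (2 * K ^ 5) ^ 7 ≤ (K ^ 9) ^ 4 := by
      calc (2 * K ^ 5) ^ 7 = 128 * K ^ 35 := by ring
      _ ≤ K * K ^ 35 := Nat.mul_le_mul hK le_rfl
      _ = (K ^ 9) ^ 4 := by ring
    have hexp : ((1 : ℝ) + 3/4) = ((7 : ℕ) : ℝ) / ((4 : ℕ) : ℝ) := by norm_num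
    rw [hexp]
    calc ((2 * K ^ 5 : ℕ) : ℝ) ^ (((7 : ℕ) : ℝ) / ((4 : ℕ) : ℝ))
        ≤ ((K ^ 9 : ℕ) : ℝ) := by
          apply rpow_aux_le (Nat.cast_nonneg _) (Nat.cast_nonneg _) (by norm_num)
          exact_mod_cast hnat
    _ ≤ ((GG K).edgeSet.ncard : ℝ) := by exact_mod_cast hE
  · -- sums + prods
    have hs := sums_le (K := K) hK3
    have hp := prods_le K
    have hsum : (sumsAlong (GG K)).ncard + (prodsAlong (GG K)).ncard
        ≤ 2 * K ^ 7 + K ^ 8 := add_le_add hs hp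
    have hcast : ((sumsAlong (GG K)).ncard : ℝ) + ((prodsAlong (GG K)).ncard : ℝ)
        ≤ ((2 * K ^ 7 + K ^ 8 : ℕ) : ℝ) := by exact_mod_cast hsum
    have hnat : (2 * K ^ 7 + K ^ 8) ^ 20 < (2 * K ^ 5) ^ 33 := by
      have ha : 2 * K ^ 7 + K ^ 8 ≤ 2 * K ^ 8 := by
        have h1 : 2 * K ^ 7 ≤ K ^ 8 := by
          calc 2 * K ^ 7 ≤ K * K ^ 7 := Nat.mul_le_mul hK2 le_rfl
          _ = K ^ 8 := by ring
        omega
      calc (2 * K ^ 7 + K ^ 8) ^ 20 ≤ (2 * K ^ 8) ^ 20 := Nat.pow_le_pow_left ha 20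
      _ = 2 ^ 20 * K ^ 160 := by ring
      _ < 2 ^ 33 * K ^ 160 := by
          have hpos : 0 < K ^ 160 := Nat.pow_pos (show 0 < K by omega)
          have h220 : (2 : ℕ) ^ 20 < 2 ^ 33 := by norm_num
          exact Nat.mul_lt_mul_of_lt_of_le h220 le_rfl hpos
      _ ≤ 2 ^ 33 * K ^ 165 := by
          have : K ^ 160 ≤ K ^ 165 := Nat.pow_le_pow_right (by omega) (by norm_num)
          exact Nat.mul_le_mul le_rfl this
      _ = (2 * K ^ 5) ^ 33 := by ring
    have hexp : ((1 : ℝ) + 3/4 - 1/10) = ((33 : ℕ) : ℝ) / ((20 : ℕ) : ℝ) := by norm_num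
    rw [hexp]
    apply lt_of_le_of_lt hcast
    apply rpow_aux_lt (Nat.cast_nonneg _) (Nat.cast_nonneg _) (by norm_num)
    exact_mod_cast hnat
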